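/- Global convergence of Gauss–Newton with backtracking-Armijo line search (Theorem A.1): assume (A1)–(A4). Let β ∈ (0,1), τ ∈ (0,1), α₀ > 0, and suppose sequences (v_k) in ℝ^n, (s_k) in ℝ^n and stepsizes (α_k) satisfy, for every k: (i) J(v_k)ᵀJ(v_k) s_k = −J(v_k)ᵀ r(v_k); (ii) 0 < α_k ≤ α₀ and the Armijo condition 𝒥(v_k + α_k s_k) ≤ 𝒥(v_k) + β α_k (s_kᵀ∇𝒥(v_k)) holds; (iii) either α_k = α₀ or the Armijo condition fails at stepsize α_k/τ (backtracking); (iv) v_{k+1} = v_k + α_k s_k. Then ∇𝒥(v_k) = J(v_k)ᵀ r(v_k) → 0 as k → ∞. -/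

import Mathlib

open scoped RealInnerProductSpace

/-- The nonlinear least-squares objective `𝒥(v) = (1/2)‖r(v)‖²`. -/
noncomputable def nlsObj {n m : ℕ} (r : EuclideanSpace ℝ (Fin n) → EuclideanSpace ℝ (Fin m))
    (v : EuclideanSpace ℝ (Fin n)) : ℝ :=
  (1 / 2) * ‖r v‖ ^ 2

/-- The Jacobian `J(v)` of `r` at `v`, as a continuous linear map. -/
noncomputable def nlsJ {n m : ℕ} (r : EuclideanSpace ℝ (Fin n) → EuclideanSpace ℝ (Fin m))
    (v : EuclideanSpace ℝ (Fin n)) :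
    EuclideanSpace ℝ (Fin n) →L[ℝ] EuclideanSpace ℝ (Fin m) :=
  fderiv ℝ r v

/-- The gradient `∇𝒥(v) = J(v)ᵀ r(v)`. -/
noncomputable def nlsGrad {n m : ℕ} (r : EuclideanSpace ℝ (Fin n) → EuclideanSpace ℝ (Fin m))
    (v : EuclideanSpace ℝ (Fin n)) : EuclideanSpace ℝ (Fin n) :=
  ContinuousLinearMap.adjoint (nlsJ r v) (r v)

lemma nls_descent {n m : ℕ} (r : EuclideanSpace ℝ (Fin n) → EuclideanSpace ℝ (Fin m))
    (hr : ContDiff ℝ 1 r) (ω Lr LJ : ℝ) (hω : 0 ≤ ω) (hLr : 0 ≤ Lr) (hLJ : 0 ≤ LJ)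
    (hA1 : ∀ v, ‖r v‖ ≤ ω) (hA2 : ∀ v w, ‖r v - r w‖ ≤ Lr * ‖v - w‖)
    (hA3 : ∀ v w, ‖nlsJ r v - nlsJ r w‖ ≤ LJ * ‖v - w‖) (v w : EuclideanSpace ℝ (Fin n)) :
    nlsObj r w ≤ nlsObj r v + ⟪w - v, nlsGrad r v⟫ + (ω * LJ + Lr ^ 2 / 2) * ‖w - v‖ ^ 2 := by
  have hdiff : ∀ x, DifferentiableAt ℝ r x := fun x => (hr.differentiable one_ne_zero).differentiableAt
  have herr : ‖r w - r v - nlsJ r v (w - v)‖ ≤ (LJ * ‖w - v‖) * ‖w - v‖ := by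
    apply Convex.norm_image_sub_le_of_norm_fderiv_le' (fun x _ => hdiff x) ?_
      (convex_segment v w) (left_mem_segment ℝ v w) (right_mem_segment ℝ v w)
    intro x hx
    have h1 : ‖nlsJ r x - nlsJ r v‖ ≤ LJ * ‖x - v‖ := hA3 x v
    have h2 : ‖x - v‖ ≤ ‖w - v‖ := by
      have := dist_add_dist_of_mem_segment hx
      have hd : dist v x ≤ dist v w := by linarith [dist_nonneg (x := x) (y := w)]
      rw [dist_comm] at hd
      simpa [dist_eq_norm, norm_sub_rev v w] using hd
    exact h1.trans (by nlinarith)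
  set e : EuclideanSpace ℝ (Fin m) := r w - r v - nlsJ r v (w - v) with he
  have hrw : r w - r v = nlsJ r v (w - v) + e := by rw [he]; abel
  have hsq : ‖r w‖ ^ 2 = ‖r v‖ ^ 2 + 2 * ⟪r v, r w - r v⟫ + ‖r w - r v‖ ^ 2 := by
    have := norm_add_sq_real (r v) (r w - r v)
    simpa using this
  have hinner : ⟪r v, r w - r v⟫ = ⟪w - v, nlsGrad r v⟫ + ⟪r v, e⟫ := by
    rw [hrw, inner_add_right]
    congr 1
    rw [real_inner_comm (nlsGrad r v) (w - v), nlsGrad]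
    exact (ContinuousLinearMap.adjoint_inner_left (nlsJ r v) (w - v) (r v)).symm
  have hie : ⟪r v, e⟫ ≤ ω * (LJ * ‖w - v‖ ^ 2) := by
    calc ⟪r v, e⟫ ≤ ‖r v‖ * ‖e‖ := real_inner_le_norm _ _
      _ ≤ ω * (LJ * ‖w - v‖ ^ 2) := by
          have := hA1 v
          nlinarith [norm_nonneg e, norm_nonneg (r v), herr, norm_nonneg (w - v)]
  have hN : ‖r w - r v‖ ^ 2 ≤ Lr ^ 2 * ‖w - v‖ ^ 2 := by
    have h := hA2 w v
    nlinarith [norm_nonneg (r w - r v), norm_nonneg (w - v)]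
  simp only [nlsObj]
  nlinarith [hsq, hinner, hie, hN]

set_option maxHeartbeats 1000000

/-- Theorem A.1: global convergence of Gauss–Newton with backtracking-Armijo line search. -/
theorem gauss_newton_backtracking_armijo_global_convergence
    {n m : ℕ} (hn : 0 < n) (hm : 0 < m)
    (r : EuclideanSpace ℝ (Fin n) → EuclideanSpace ℝ (Fin m))
    (hr : ContDiff ℝ 1 r)
    -- (A1)
    (ω : ℝ) (hω : 0 < ω) (hA1 : ∀ v, ‖r v‖ ≤ ω)
    -- (A2)
    (Lr : ℝ) (hLr : 0 < Lr) (hA2 : ∀ v w, ‖r v - r w‖ ≤ Lr * ‖v - w‖)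
    -- (A3)
    (LJ : ℝ) (hLJ : 0 < LJ) (hA3 : ∀ v w, ‖nlsJ r v - nlsJ r w‖ ≤ LJ * ‖v - w‖)
    -- (A4)
    (ν : ℝ) (hν : 0 < ν) (hA4 : ∀ v z, ν * ‖z‖ ≤ ‖nlsJ r v z‖)
    -- algorithm parameters
    (β τ α₀ : ℝ) (hβ : β ∈ Set.Ioo (0 : ℝ) 1) (hτ : τ ∈ Set.Ioo (0 : ℝ) 1) (hα₀ : 0 < α₀)
    -- iterates
    (v s : ℕ → EuclideanSpace ℝ (Fin n)) (α : ℕ → ℝ)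
    -- (i) Gauss–Newton step: J(v_k)ᵀ J(v_k) s_k = −J(v_k)ᵀ r(v_k)
    (hstep : ∀ k, ContinuousLinearMap.adjoint (nlsJ r (v k)) (nlsJ r (v k) (s k)) =
      -ContinuousLinearMap.adjoint (nlsJ r (v k)) (r (v k)))
    -- (ii) stepsize bounds and Armijo condition
    (hαpos : ∀ k, 0 < α k) (hαle : ∀ k, α k ≤ α₀)
    (harmijo : ∀ k, nlsObj r (v k + α k • s k) ≤
      nlsObj r (v k) + β * α k * ⟪s k, nlsGrad r (v k)⟫)
    -- (iii) backtracking: either α_k = α₀ or the Armijo condition fails at α_k/τ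
    (hback : ∀ k, α k = α₀ ∨
      ¬ (nlsObj r (v k + (α k / τ) • s k) ≤
        nlsObj r (v k) + β * (α k / τ) * ⟪s k, nlsGrad r (v k)⟫))
    -- (iv) iterate update
    (hupdate : ∀ k, v (k + 1) = v k + α k • s k) :
    Filter.Tendsto (fun k => nlsGrad r (v k)) Filter.atTop (nhds 0) := by
  obtain ⟨hβ0, hβ1⟩ := hβ
  obtain ⟨hτ0, hτ1⟩ := hτ
  have hJnorm : ∀ x, ‖nlsJ r x‖ ≤ Lr := by
    intro x
    have hlip : LipschitzWith (Real.toNNReal Lr) r := by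
      apply LipschitzWith.of_dist_le_mul
      intro a b
      rw [dist_eq_norm, dist_eq_norm]
      simpa [Real.coe_toNNReal Lr hLr.le] using hA2 a b
    have h := norm_fderiv_le_of_lipschitz ℝ hlip (x₀ := x)
    simpa [nlsJ, Real.coe_toNNReal Lr hLr.le] using h
  set C : ℝ := ω * LJ + Lr ^ 2 / 2 with hC
  have hCpos : 0 < C := by positivity
  have hgdef : ∀ k, nlsGrad r (v k) =
      -(ContinuousLinearMap.adjoint (nlsJ r (v k)) (nlsJ r (v k) (s k))) := by
    intro k
    unfold nlsGrad
    rw [hstep k, neg_neg]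
  have hsg : ∀ k, ⟪s k, nlsGrad r (v k)⟫ = -‖nlsJ r (v k) (s k)‖ ^ 2 := by
    intro k
    rw [hgdef k, inner_neg_right, ContinuousLinearMap.adjoint_inner_right,
      real_inner_self_eq_norm_sq]
  have hgD : ∀ k, ‖nlsGrad r (v k)‖ ^ 2 ≤ Lr ^ 2 * ‖nlsJ r (v k) (s k)‖ ^ 2 := by
    intro k
    have h1 : ‖nlsGrad r (v k)‖ ≤ Lr * ‖nlsJ r (v k) (s k)‖ := by
      rw [hgdef k, norm_neg]
      calc ‖ContinuousLinearMap.adjoint (nlsJ r (v k)) (nlsJ r (v k) (s k))‖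
          ≤ ‖ContinuousLinearMap.adjoint (nlsJ r (v k))‖ * ‖nlsJ r (v k) (s k)‖ :=
            ContinuousLinearMap.le_opNorm _ _
        _ ≤ Lr * ‖nlsJ r (v k) (s k)‖ := by
            apply mul_le_mul_of_nonneg_right _ (norm_nonneg _)
            rw [ContinuousLinearMap.adjoint.norm_map]
            exact hJnorm _
    nlinarith [norm_nonneg (nlsGrad r (v k)), norm_nonneg (nlsJ r (v k) (s k))]
  have hsD : ∀ k, ν ^ 2 * ‖s k‖ ^ 2 ≤ ‖nlsJ r (v k) (s k)‖ ^ 2 := by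
    intro k
    have h1 := hA4 (v k) (s k)
    have h2 := mul_self_le_mul_self (mul_nonneg hν.le (norm_nonneg (s k))) h1
    nlinarith [h2]
  have hdesc := nls_descent r hr ω Lr LJ hω.le hLr.le hLJ.le hA1 hA2 hA3
  set αmin : ℝ := min α₀ (τ * (1 - β) * ν ^ 2 / C) with hαmin
  have h1b : (0 : ℝ) < 1 - β := by linarith
  have hαminpos : 0 < αmin :=
    lt_min hα₀ (div_pos (mul_pos (mul_pos hτ0 h1b) (pow_pos hν 2)) hCpos)
  have hαlb : ∀ k, αmin ≤ α k := by
    intro k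
    rcases hback k with h | h
    · rw [h]; exact min_le_left _ _
    · by_cases hs0 : s k = 0
      · exact absurd (by simp [hs0]) h
      · set c := α k / τ with hcdef
        have hcpos : 0 < c := div_pos (hαpos k) hτ0
        have hspos : 0 < ‖s k‖ ^ 2 := pow_pos (norm_pos_iff.mpr hs0) 2
        have hD0 : 0 < ‖nlsJ r (v k) (s k)‖ ^ 2 :=
          lt_of_lt_of_le (mul_pos (pow_pos hν 2) hspos) (hsD k)
        have hnsm : ‖c • s k‖ ^ 2 = c ^ 2 * ‖s k‖ ^ 2 := by
          rw [norm_smul, mul_pow, Real.norm_eq_abs, sq_abs]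
        have hism : ⟪c • s k, nlsGrad r (v k)⟫ = c * ⟪s k, nlsGrad r (v k)⟫ :=
          real_inner_smul_left _ _ _
        have hdk := hdesc (v k) (v k + c • s k)
        rw [add_sub_cancel_left, hism, hsg k, hnsm, ← hC] at hdk
        rw [hsg k] at h
        have h' : nlsObj r (v k) + β * c * -‖nlsJ r (v k) (s k)‖ ^ 2 <
            nlsObj r (v k + c • s k) := not_le.1 h
        have t1 : (1 - β) * c * ‖nlsJ r (v k) (s k)‖ ^ 2 <
            C * (c ^ 2 * ‖s k‖ ^ 2) := by nlinarith [h', hdk]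
        have t2 : (1 - β) * ‖nlsJ r (v k) (s k)‖ ^ 2 < C * c * ‖s k‖ ^ 2 := by
          nlinarith [t1, hcpos]
        have t3 : (1 - β) * ν ^ 2 < C * c := by
          nlinarith [t2, hsD k, hspos, hβ1]
        have hc' : c * τ = α k := div_mul_cancel₀ _ hτ0.ne'
        have hαgt : τ * (1 - β) * ν ^ 2 / C < α k := by
          rw [div_lt_iff₀ hCpos]
          nlinarith [t3, hτ0]
        exact le_of_lt (lt_of_le_of_lt (min_le_right _ _) hαgt)
  have hkey : ∀ k, αmin / Lr ^ 2 * ‖nlsGrad r (v k)‖ ^ 2 ≤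
      α k * ‖nlsJ r (v k) (s k)‖ ^ 2 := by
    intro k
    have h1 : ‖nlsGrad r (v k)‖ ^ 2 / Lr ^ 2 ≤ ‖nlsJ r (v k) (s k)‖ ^ 2 := by
      rw [div_le_iff₀ (by positivity)]
      nlinarith [hgD k]
    calc αmin / Lr ^ 2 * ‖nlsGrad r (v k)‖ ^ 2
        = αmin * (‖nlsGrad r (v k)‖ ^ 2 / Lr ^ 2) := by ring
      _ ≤ α k * ‖nlsJ r (v k) (s k)‖ ^ 2 :=
          mul_le_mul (hαlb k) h1 (by positivity) (hαpos k).le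
  have hdec : ∀ k, nlsObj r (v (k + 1)) ≤
      nlsObj r (v k) - β * (α k * ‖nlsJ r (v k) (s k)‖ ^ 2) := by
    intro k
    have h := harmijo k
    rw [hsg k] at h
    rw [hupdate k]
    nlinarith [h]
  have hobjnn : ∀ x, 0 ≤ nlsObj r x := by
    intro x; unfold nlsObj; positivity
  have htel : ∀ N, nlsObj r (v N) +
      ∑ k ∈ Finset.range N, β * (α k * ‖nlsJ r (v k) (s k)‖ ^ 2) ≤ nlsObj r (v 0) := by
    intro N
    induction N with
    | zero => simp
    | succ N ih =>
        rw [Finset.sum_range_succ]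
        have := hdec N
        linarith
  have hsum : ∀ N, ∑ k ∈ Finset.range N,
      β * (αmin / Lr ^ 2) * ‖nlsGrad r (v k)‖ ^ 2 ≤ nlsObj r (v 0) := by
    intro N
    have h1 : ∑ k ∈ Finset.range N, β * (αmin / Lr ^ 2) * ‖nlsGrad r (v k)‖ ^ 2 ≤
        ∑ k ∈ Finset.range N, β * (α k * ‖nlsJ r (v k) (s k)‖ ^ 2) := by
      apply Finset.sum_le_sum
      intro k _
      have := hkey k
      nlinarith [hkey k, hβ0]
    exact h1.trans (by linarith [htel N, hobjnn (v N)])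
  have hcpos : (0 : ℝ) < β * (αmin / Lr ^ 2) := by positivity
  have hsummable : Summable (fun k => β * (αmin / Lr ^ 2) * ‖nlsGrad r (v k)‖ ^ 2) :=
    summable_of_sum_range_le (fun k => by positivity) hsum
  have htend0 := hsummable.tendsto_atTop_zero
  have htend1 : Filter.Tendsto (fun k => ‖nlsGrad r (v k)‖ ^ 2) Filter.atTop (nhds 0) := by
    have h2 := htend0.const_mul ((β * (αmin / Lr ^ 2))⁻¹)
    simp only [mul_zero] at h2
    have h3 : (fun k => (β * (αmin / Lr ^ 2))⁻¹ * (β * (αmin / Lr ^ 2) * ‖nlsGrad r (v k)‖ ^ 2)) =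
        fun k => ‖nlsGrad r (v k)‖ ^ 2 := by
      funext k
      rw [← mul_assoc, inv_mul_cancel₀ hcpos.ne', one_mul]
    rwa [h3] at h2
  have h3 : Filter.Tendsto (fun k => Real.sqrt (‖nlsGrad r (v k)‖ ^ 2)) Filter.atTop
      (nhds (Real.sqrt 0)) := (Real.continuous_sqrt.tendsto 0).comp htend1
  rw [Real.sqrt_zero] at h3
  have h4 : (fun k => Real.sqrt (‖nlsGrad r (v k)‖ ^ 2)) = fun k => ‖nlsGrad r (v k)‖ := by
    funext k; exact Real.sqrt_sq (norm_nonneg _)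
  rw [h4] at h3
  exact tendsto_zero_iff_norm_tendsto_zero.mpr h3
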